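/- For any E-linear code C of length 2n, the two-sided symplectic double dual recovers the code: (C^{⊥_S})^{⊥_S} = C. -/

import Mathlib

open Finset

/-- The non-unital ring `E`, realized as pairs `(u, v) ∈ F₂ × F₂`
representing `uκ + vζ`. -/
def Ering : Type := (ZMod 2) × (ZMod 2)

namespace Ering

instance : AddCommGroup Ering := inferInstanceAs (AddCommGroup ((ZMod 2) × (ZMod 2)))
instance : DecidableEq Ering := inferInstanceAs (DecidableEq ((ZMod 2) × (ZMod 2)))
instance : Fintype Ering := inferInstanceAs (Fintype ((ZMod 2) × (ZMod 2)))

instance : Mul Ering := ⟨fun a b => (a.1 * b.1, a.2 * b.1)⟩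

instance : NonUnitalRing Ering :=
  { (inferInstance : AddCommGroup Ering), (inferInstance : Mul Ering) with
    left_distrib := by decide
    right_distrib := by decide
    zero_mul := by decide
    mul_zero := by decide
    mul_assoc := by decide }

/-- The generator κ. -/
def kappa : Ering := ((1 : ZMod 2), (0 : ZMod 2))
/-- The generator τ. -/
def tau : Ering := ((1 : ZMod 2), (1 : ZMod 2))
/-- ζ = κ + τ. -/
def zeta : Ering := ((0 : ZMod 2), (1 : ZMod 2))

/-- The scalar action of `F₂` on `E`: `u • e = e` if `u = 1`, else `0`. -/
def fsmul (u : ZMod 2) (e : Ering) : Ering := if u = 1 then e else 0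

/-- `E`-vectors of length `2n`, written as a pair `(u | v)` of halves of length `n`. -/
abbrev VE (n : ℕ) := (Fin n → Ering) × (Fin n → Ering)

/-- `F₂`-vectors of length `2n`, written as a pair of halves of length `n`. -/
abbrev VF (n : ℕ) := (Fin n → ZMod 2) × (Fin n → ZMod 2)

/-- Symplectic inner product on `E^{2n}`: `⟨(u|v),(u'|v')⟩ₛ = ⟨u,v'⟩ + ⟨v,u'⟩`. -/
def sympE {n : ℕ} (x y : VE n) : Ering := ∑ i, x.1 i * y.2 i + ∑ i, x.2 i * y.1 i

/-- Symplectic inner product on `F₂^{2n}`. -/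
def sympF {n : ℕ} (x y : VF n) : ZMod 2 := ∑ i, x.1 i * y.2 i + ∑ i, x.2 i * y.1 i

/-- An `E`-linear code: a left `E`-submodule of `E^{2n}`. -/
def IsLinearCode {n : ℕ} (C : Set (VE n)) : Prop :=
  (0 : VE n) ∈ C ∧ (∀ x ∈ C, ∀ y ∈ C, x + y ∈ C) ∧
    (∀ e : Ering, ∀ x ∈ C, ((fun i => e * x.1 i, fun i => e * x.2 i) : VE n) ∈ C)

/-- Componentwise reduction `π : E^{2n} → F₂^{2n}`, `π(uκ + vζ) = u`. -/
def resVec {n : ℕ} (x : VE n) : VF n := (fun i => (x.1 i).1, fun i => (x.2 i).1)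

/-- For `e ∈ E` and `v ∈ F₂^{2n}`, the vector `ev ∈ E^{2n}` with entries `vᵢ • e`. -/
def evec {n : ℕ} (e : Ering) (v : VF n) : VE n :=
  (fun i => fsmul (v.1 i) e, fun i => fsmul (v.2 i) e)

/-- The residue code `C_Res = π(C)`. -/
def resCode {n : ℕ} (C : Set (VE n)) : Set (VF n) := resVec '' C

/-- The torsion code `C_Tor = {v : ζv ∈ C}`. -/
def torCode {n : ℕ} (C : Set (VE n)) : Set (VF n) := {v | evec zeta v ∈ C}

/-- The left symplectic dual. -/
def leftDual {n : ℕ} (C : Set (VE n)) : Set (VE n) := {z | ∀ w ∈ C, sympE z w = 0}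

/-- The right symplectic dual. -/
def rightDual {n : ℕ} (C : Set (VE n)) : Set (VE n) := {z | ∀ w ∈ C, sympE w z = 0}

/-- The two-sided symplectic dual. -/
def dual {n : ℕ} (C : Set (VE n)) : Set (VE n) := leftDual C ∩ rightDual C

/-- The binary symplectic dual of `D ⊆ F₂^{2n}`. -/
def dualF {n : ℕ} (D : Set (VF n)) : Set (VF n) := {z | ∀ w ∈ D, sympF z w = 0}

/-- The two-sided symplectic hull. -/
def SHull {n : ℕ} (C : Set (VE n)) : Set (VE n) := C ∩ dual C

/-- The left symplectic hull. -/
def LSHull {n : ℕ} (C : Set (VE n)) : Set (VE n) := C ∩ leftDual C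

/-- The right symplectic hull. -/
def RSHull {n : ℕ} (C : Set (VE n)) : Set (VE n) := C ∩ rightDual C

/-- Symplectic hull of a binary code. -/
def SHullF {n : ℕ} (D : Set (VF n)) : Set (VF n) := D ∩ dualF D

/-- A free `E`-linear code: residue and torsion codes coincide. -/
def IsFree {n : ℕ} (C : Set (VE n)) : Prop := resCode C = torCode C

end Ering


namespace EringAux

open Ering

variable {n : ℕ}

/-! ### Componentwise structure of `Ering` -/

/-- The second-component vector. -/
def secVec {n : ℕ} (x : VE n) : VF n := (fun i => (x.1 i).2, fun i => (x.2 i).2)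

def fstHom : Ering →+ ZMod 2 := AddMonoidHom.fst (ZMod 2) (ZMod 2)
def sndHom : Ering →+ ZMod 2 := AddMonoidHom.snd (ZMod 2) (ZMod 2)

lemma sympE_fst (z w : VE n) : (sympE z w).1 = sympF (resVec z) (resVec w) := by
  show fstHom (∑ i, z.1 i * w.2 i + ∑ i, z.2 i * w.1 i) = _
  rw [map_add, map_sum, map_sum]
  rfl

lemma sympE_snd (z w : VE n) : (sympE z w).2 = sympF (secVec z) (resVec w) := by
  show sndHom (∑ i, z.1 i * w.2 i + ∑ i, z.2 i * w.1 i) = _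
  rw [map_add, map_sum, map_sum]
  rfl

lemma ering_eq_zero {a : Ering} (h1 : a.1 = 0) (h2 : a.2 = 0) : a = 0 := by
  exact Prod.ext h1 h2

lemma sympE_eq_zero_iff (z w : VE n) :
    sympE z w = 0 ↔ sympF (resVec z) (resVec w) = 0 ∧ sympF (secVec z) (resVec w) = 0 := by
  constructor
  · intro h
    constructor
    · rw [← sympE_fst, h]; rfl
    · rw [← sympE_snd, h]; rfl
  · rintro ⟨h1, h2⟩
    exact ering_eq_zero (by rw [sympE_fst]; exact h1) (by rw [sympE_snd]; exact h2)

lemma sympF_comm (x y : VF n) : sympF x y = sympF y x := by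
  unfold sympF
  rw [add_comm]
  congr 1 <;> exact Finset.sum_congr rfl (fun i _ => mul_comm _ _)

lemma sympF_zero_left (y : VF n) : sympF 0 y = 0 := by
  simp [sympF]

/-! ### Pointwise decidable facts -/

lemma fsmul_zeta_pair : ∀ u : ZMod 2, fsmul u zeta = (((0 : ZMod 2), u) : Ering) := by
  intro u; fin_cases u <;> rfl
lemma fsmul_kappa_pair : ∀ u : ZMod 2, fsmul u kappa = ((u, (0 : ZMod 2)) : Ering) := by
  intro u; fin_cases u <;> rfl
lemma fsmul_zeta_fst_eq : ∀ e : Ering, fsmul e.1 zeta = zeta * e := by decide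
lemma mul_emul : ∀ a e c : Ering, a * (e * c) = fsmul e.1 (a * c) := by decide
lemma fsmul_zero_left : ∀ x : Ering, fsmul (0 : ZMod 2) x = 0 := by decide
lemma fsmul_one_left : ∀ x : Ering, fsmul (1 : ZMod 2) x = x := by decide
lemma fsmul_zero_right : ∀ u : ZMod 2, fsmul u (0 : Ering) = 0 := by decide
lemma fsmul_zeta_add : ∀ u v : ZMod 2, fsmul (u + v) zeta = fsmul u zeta + fsmul v zeta := by
  decide
lemma zmod2_cases : ∀ u : ZMod 2, u = 0 ∨ u = 1 := by decide
lemma decomp_key : ∀ a b : Ering, a.1 = b.1 → a = b + fsmul (a.2 + b.2) zeta := by decide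
lemma tau_key : ∀ a : Ering, fsmul (a.2 + a.1) zeta = a + tau * a := by decide

/-! ### `resVec`, `secVec`, `evec` lemmas -/

lemma resVec_evec_zeta (v : VF n) : resVec (evec zeta v) = 0 := by
  refine Prod.ext (funext fun i => ?_) (funext fun i => ?_) <;>
    · show (fsmul _ zeta).1 = 0
      rw [fsmul_zeta_pair]

lemma secVec_evec_zeta (v : VF n) : secVec (evec zeta v) = v := by
  refine Prod.ext (funext fun i => ?_) (funext fun i => ?_) <;>
    · show (fsmul _ zeta).2 = _
      rw [fsmul_zeta_pair]

lemma resVec_evec_kappa (u : VF n) : resVec (evec kappa u) = u := by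
  refine Prod.ext (funext fun i => ?_) (funext fun i => ?_) <;>
    · show (fsmul _ kappa).1 = _
      rw [fsmul_kappa_pair]

lemma secVec_evec_kappa (u : VF n) : secVec (evec kappa u) = 0 := by
  refine Prod.ext (funext fun i => ?_) (funext fun i => ?_) <;>
    · show (fsmul _ kappa).2 = 0
      rw [fsmul_kappa_pair]

lemma evec_zeta_add (u v : VF n) : evec zeta (u + v) = evec zeta u + evec zeta v := by
  refine Prod.ext (funext fun i => ?_) (funext fun i => ?_) <;> exact fsmul_zeta_add _ _

lemma evec_zeta_zero : evec zeta (0 : VF n) = 0 := by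
  refine Prod.ext (funext fun i => ?_) (funext fun i => ?_) <;> exact fsmul_zero_left zeta

/-! ### Basic code facts -/

lemma resCode_subset_torCode {C : Set (VE n)} (hC : IsLinearCode C) :
    resCode C ⊆ torCode C := by
  rintro v ⟨w, hw, rfl⟩
  have h := hC.2.2 zeta w hw
  show evec zeta (resVec w) ∈ C
  have he : evec zeta (resVec w) =
      ((fun i => zeta * w.1 i, fun i => zeta * w.2 i) : VE n) := by
    refine Prod.ext (funext fun i => ?_) (funext fun i => ?_) <;> exact fsmul_zeta_fst_eq _
  rw [he]; exact h

lemma torCode_add {C : Set (VE n)} (hC : IsLinearCode C) {a b : VF n}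
    (ha : a ∈ torCode C) (hb : b ∈ torCode C) : a + b ∈ torCode C := by
  show evec zeta (a + b) ∈ C
  rw [evec_zeta_add]
  exact hC.2.1 _ ha _ hb

lemma torCode_zero {C : Set (VE n)} (hC : IsLinearCode C) : (0 : VF n) ∈ torCode C := by
  show evec zeta (0 : VF n) ∈ C
  rw [evec_zeta_zero]; exact hC.1

lemma resCode_zero {C : Set (VE n)} (hC : IsLinearCode C) : (0 : VF n) ∈ resCode C := by
  refine ⟨0, hC.1, ?_⟩
  rfl

lemma resVec_add (x y : VE n) : resVec (x + y) = resVec x + resVec y := rfl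

lemma resCode_add {C : Set (VE n)} (hC : IsLinearCode C) {a b : VF n}
    (ha : a ∈ resCode C) (hb : b ∈ resCode C) : a + b ∈ resCode C := by
  obtain ⟨x, hx, rfl⟩ := ha
  obtain ⟨y, hy, rfl⟩ := hb
  exact ⟨x + y, hC.2.1 _ hx _ hy, rfl⟩

lemma secVec_add (x y : VE n) : secVec (x + y) = secVec x + secVec y := rfl

lemma vf_add_add_cancel (a b : VF n) : a + b + b = a := by
  have h : ∀ u v : ZMod 2, u + v + v = u := by decide
  exact Prod.ext (funext fun i => h _ _) (funext fun i => h _ _)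

lemma secVec_mem_torCode {C : Set (VE n)} (hC : IsLinearCode C) {w : VE n} (hw : w ∈ C) :
    secVec w ∈ torCode C := by
  have h1 : ((fun i => tau * w.1 i, fun i => tau * w.2 i) : VE n) ∈ C := hC.2.2 tau w hw
  have h2 : w + ((fun i => tau * w.1 i, fun i => tau * w.2 i) : VE n) ∈ C := hC.2.1 _ hw _ h1
  have h3 : secVec w + resVec w ∈ torCode C := by
    show evec zeta (secVec w + resVec w) ∈ C
    have he : evec zeta (secVec w + resVec w) =
        w + ((fun i => tau * w.1 i, fun i => tau * w.2 i) : VE n) := by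
      refine Prod.ext (funext fun i => ?_) (funext fun i => ?_) <;> exact tau_key _
    rw [he]; exact h2
  have h4 : resVec w ∈ torCode C := resCode_subset_torCode hC ⟨w, hw, rfl⟩
  have h5 := torCode_add hC h3 h4
  rwa [vf_add_add_cancel] at h5

/-! ### Membership characterizations -/

lemma mem_dual_iff {C : Set (VE n)} (hC : IsLinearCode C) (z : VE n) :
    z ∈ dual C ↔ (∀ v ∈ torCode C, sympF (resVec z) v = 0) ∧
      (∀ v ∈ resCode C, sympF (secVec z) v = 0) := by
  constructor
  · rintro ⟨hl, hr⟩
    constructor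
    · intro v hv
      have h := hr (evec zeta v) hv
      rw [sympE_eq_zero_iff] at h
      have h2 := h.2
      rw [secVec_evec_zeta] at h2
      rw [sympF_comm]; exact h2
    · rintro v ⟨w, hw, rfl⟩
      have h := hl w hw
      rw [sympE_eq_zero_iff] at h
      exact h.2
  · rintro ⟨h1, h2⟩
    constructor
    · intro w hw
      rw [sympE_eq_zero_iff]
      exact ⟨h1 _ (resCode_subset_torCode hC ⟨w, hw, rfl⟩), h2 _ ⟨w, hw, rfl⟩⟩
    · intro w hw
      rw [sympE_eq_zero_iff]
      constructor
      · rw [sympF_comm]; exact h1 _ (resCode_subset_torCode hC ⟨w, hw, rfl⟩)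
      · rw [sympF_comm]; exact h1 _ (secVec_mem_torCode hC hw)

lemma mem_iff_res_tor {C : Set (VE n)} (hC : IsLinearCode C) (z : VE n) :
    z ∈ C ↔ resVec z ∈ resCode C ∧ secVec z ∈ torCode C := by
  constructor
  · intro hz
    exact ⟨⟨z, hz, rfl⟩, secVec_mem_torCode hC hz⟩
  · rintro ⟨⟨w, hw, hres⟩, htor⟩
    have hmem : evec zeta (secVec z + secVec w) ∈ C := by
      rw [evec_zeta_add]
      exact hC.2.1 _ htor _ (secVec_mem_torCode hC hw)
    have hz : z = w + evec zeta (secVec z + secVec w) := by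
      refine Prod.ext (funext fun i => ?_) (funext fun i => ?_)
      · exact decomp_key (z.1 i) (w.1 i) (congrFun (congrArg Prod.fst hres.symm) i)
      · exact decomp_key (z.2 i) (w.2 i) (congrFun (congrArg Prod.snd hres.symm) i)
    rw [hz]
    exact hC.2.1 w hw _ hmem

/-! ### Linearity of the dual -/

lemma sympE_zero_left (w : VE n) : sympE (0 : VE n) w = 0 := by
  simp [sympE]

lemma sympE_zero_right (w : VE n) : sympE w (0 : VE n) = 0 := by
  simp [sympE]

lemma sympE_add_left (x y w : VE n) : sympE (x + y) w = sympE x w + sympE y w := by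
  simp [sympE, add_mul, Finset.sum_add_distrib]
  abel

lemma sympE_add_right (x y w : VE n) : sympE w (x + y) = sympE w x + sympE w y := by
  simp [sympE, mul_add, Finset.sum_add_distrib]
  abel

lemma sympE_smul_left (e : Ering) (x w : VE n) :
    sympE ((fun i => e * x.1 i, fun i => e * x.2 i) : VE n) w = e * sympE x w := by
  simp [sympE, mul_assoc, Finset.mul_sum, mul_add]

lemma sympE_smul_right (e : Ering) (x w : VE n) :
    sympE w ((fun i => e * x.1 i, fun i => e * x.2 i) : VE n) = fsmul e.1 (sympE w x) := by
  rcases zmod2_cases e.1 with h | h <;>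
    simp [sympE, mul_emul, h, fsmul_zero_left, fsmul_one_left]

lemma isLinearCode_dual (C : Set (VE n)) : IsLinearCode (dual C) := by
  refine ⟨⟨fun w _ => sympE_zero_left w, fun w _ => sympE_zero_right w⟩, ?_, ?_⟩
  · rintro x ⟨hxl, hxr⟩ y ⟨hyl, hyr⟩
    constructor
    · intro w hw
      rw [sympE_add_left, hxl w hw, hyl w hw, add_zero]
    · intro w hw
      rw [sympE_add_right, hxr w hw, hyr w hw, add_zero]
  · rintro e x ⟨hxl, hxr⟩
    constructor
    · intro w hw
      rw [sympE_smul_left, hxl w hw, mul_zero]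
    · intro w hw
      rw [sympE_smul_right, hxr w hw, fsmul_zero_right]

/-! ### Residue and torsion codes of the dual -/

lemma resCode_dual {C : Set (VE n)} (hC : IsLinearCode C) :
    resCode (dual C) = dualF (torCode C) := by
  ext u
  constructor
  · rintro ⟨z, hz, rfl⟩
    exact fun v hv => ((mem_dual_iff hC z).1 hz).1 v hv
  · intro hu
    refine ⟨evec kappa u, ?_, resVec_evec_kappa u⟩
    rw [mem_dual_iff hC]
    constructor
    · intro v hv
      rw [resVec_evec_kappa]
      exact hu v hv
    · intro v hv
      rw [secVec_evec_kappa]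
      exact sympF_zero_left v

lemma torCode_dual {C : Set (VE n)} (hC : IsLinearCode C) :
    torCode (dual C) = dualF (resCode C) := by
  ext v
  constructor
  · intro hv r hr
    have h := ((mem_dual_iff hC _).1 hv).2 r hr
    rwa [secVec_evec_zeta] at h
  · intro hv
    show evec zeta v ∈ dual C
    rw [mem_dual_iff hC]
    constructor
    · intro t ht
      rw [resVec_evec_zeta]
      exact sympF_zero_left t
    · intro r hr
      rw [secVec_evec_zeta]
      exact hv r hr

/-! ### Binary double duality via bilinear forms -/

lemma sympF_add_left (x x' y : VF n) : sympF (x + x') y = sympF x y + sympF x' y := by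
  show (∑ i, (x.1 i + x'.1 i) * y.2 i) + (∑ i, (x.2 i + x'.2 i) * y.1 i) =
    ((∑ i, x.1 i * y.2 i) + ∑ i, x.2 i * y.1 i) + ((∑ i, x'.1 i * y.2 i) + ∑ i, x'.2 i * y.1 i)
  simp only [add_mul, Finset.sum_add_distrib]
  ring

lemma sympF_smul_left (c : ZMod 2) (x y : VF n) : sympF (c • x) y = c * sympF x y := by
  show (∑ i, (c * x.1 i) * y.2 i) + (∑ i, (c * x.2 i) * y.1 i) =
    c * ((∑ i, x.1 i * y.2 i) + ∑ i, x.2 i * y.1 i)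
  rw [mul_add, Finset.mul_sum, Finset.mul_sum]
  congr 1 <;> exact Finset.sum_congr rfl (fun i _ => by ring)

lemma sympF_add_right (y x x' : VF n) : sympF y (x + x') = sympF y x + sympF y x' := by
  rw [sympF_comm, sympF_add_left, sympF_comm x y, sympF_comm x' y]

lemma sympF_smul_right (c : ZMod 2) (y x : VF n) : sympF y (c • x) = c * sympF y x := by
  rw [sympF_comm, sympF_smul_left, sympF_comm x y]

def BF (n : ℕ) : LinearMap.BilinForm (ZMod 2) (VF n) :=
  LinearMap.mk₂ (ZMod 2) sympF
    (fun x x' y => sympF_add_left x x' y)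
    (fun c x y => sympF_smul_left c x y)
    (fun x y y' => sympF_add_right x y y')
    (fun c x y => sympF_smul_right c x y)

lemma BF_apply (x y : VF n) : BF n x y = sympF x y := rfl

lemma BF_nondeg : (BF n).Nondegenerate := by
  refine (LinearMap.IsRefl.nondegenerate_iff_separatingLeft
    (fun x y h => by rw [BF_apply] at h ⊢; rwa [sympF_comm])).2 ?_
  intro x hx
  have h1 : ∀ j, x.1 j = 0 := by
    intro j
    have h := hx (((0 : Fin n → ZMod 2), Pi.single j 1) : VF n)
    rw [BF_apply] at h
    simpa [sympF, Pi.single_apply, mul_ite, Finset.sum_ite_eq'] using h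
  have h2 : ∀ j, x.2 j = 0 := by
    intro j
    have h := hx (((Pi.single j 1, 0) : VF n))
    rw [BF_apply] at h
    simpa [sympF, Pi.single_apply, mul_ite, Finset.sum_ite_eq'] using h
  exact Prod.ext (funext h1) (funext h2)

lemma BF_refl : (BF n).IsRefl := by
  intro x y h
  rw [BF_apply] at h ⊢
  rwa [sympF_comm]

/-- Build a submodule from a binary linear code. -/
def toSub (D : Set (VF n)) (h0 : (0 : VF n) ∈ D)
    (hadd : ∀ x ∈ D, ∀ y ∈ D, x + y ∈ D) : Submodule (ZMod 2) (VF n) where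
  carrier := D
  zero_mem' := h0
  add_mem' := fun hx hy => hadd _ hx _ hy
  smul_mem' := by
    intro c x hx
    rcases zmod2_cases c with h | h
    · rw [h, zero_smul]; exact h0
    · rw [h, one_smul]; exact hx

lemma dualF_submodule (M : Submodule (ZMod 2) (VF n)) :
    dualF (M : Set (VF n)) = ((BF n).orthogonal M : Set (VF n)) := by
  ext z
  constructor
  · intro hz w hw
    have := hz w hw
    show BF n w z = 0
    rw [BF_apply, sympF_comm]
    exact this
  · intro hz w hw
    have := hz w hw
    rw [BF_apply, sympF_comm] at this
    exact this

lemma dualF_dualF (D : Set (VF n)) (h0 : (0 : VF n) ∈ D)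
    (hadd : ∀ x ∈ D, ∀ y ∈ D, x + y ∈ D) : dualF (dualF D) = D := by
  have hD : D = ((toSub D h0 hadd : Submodule (ZMod 2) (VF n)) : Set (VF n)) := rfl
  rw [hD, dualF_submodule, dualF_submodule,
    LinearMap.BilinForm.orthogonal_orthogonal BF_nondeg BF_refl]

end EringAux

open EringAux

open Ering
/-- the two-sided symplectic double dual recovers the code. -/
theorem Ering.dual_dual {n : ℕ} (C : Set (VE n)) (hC : IsLinearCode C) :
    dual (dual C) = C := by
  ext z
  rw [mem_dual_iff (isLinearCode_dual C) z, torCode_dual hC, resCode_dual hC,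
    mem_iff_res_tor hC z]
  have hr : dualF (dualF (resCode C)) = resCode C :=
    dualF_dualF _ (resCode_zero hC) (fun x hx y hy => resCode_add hC hx hy)
  have ht : dualF (dualF (torCode C)) = torCode C :=
    dualF_dualF _ (torCode_zero hC) (fun x hx y hy => torCode_add hC hx hy)
  constructor
  · rintro ⟨h1, h2⟩
    constructor
    · rw [← hr]; exact h1
    · rw [← ht]; exact h2
  · rintro ⟨h1, h2⟩
    rw [← hr] at h1
    rw [← ht] at h2
    exact ⟨h1, h2⟩
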